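/- Let G be a group and a, b ∈ G with b a b^{-1} = a^r for some integer r. Then for every ℓ ≥ 3, all integers α_1,…,α_ℓ and all natural numbers β_1,…,β_ℓ, the left-normed commutator satisfies [a^{α_1} b^{β_1}, a^{α_2} b^{β_2}, …, a^{α_ℓ} b^{β_ℓ}] = a^{(α_1(1 − r^{β_2}) − α_2(1 − r^{β_1}))·(1 − r^{β_3})⋯(1 − r^{β_ℓ})}. -/

import Mathlib

open scoped commutatorElement

/-- The left-normed commutator `[x₁, x₂, …, x_ℓ] = [[x₁, …, x_{ℓ-1}], x_ℓ]`,
with the conventions that the empty list gives `1` and a singleton gives its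
entry. -/
def leftNormedCommutator {G : Type*} [Group G] : List G → G
  | [] => 1
  | x :: xs => xs.foldl (fun acc y => ⁅acc, y⁆) x

section Aux
variable {G : Type*} [Group G]

lemma key_aux (a b : G) (r : ℤ) (h : b * a * b⁻¹ = a ^ r) (n : ℕ) (m : ℤ) :
    b ^ n * a ^ m = a ^ (m * r ^ n) * b ^ n := by
  induction n generalizing m with
  | zero => simp
  | succ n ih =>
      have hb : b * a ^ m = a ^ (m * r) * b := by
        have h2 : b * a ^ m * b⁻¹ = (b * a * b⁻¹) ^ m := by rw [conj_zpow]
        rw [h, ← zpow_mul, mul_comm r m] at h2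
        calc b * a ^ m = (b * a ^ m * b⁻¹) * b := by group
          _ = a ^ (m * r) * b := by rw [h2]
      have he : m * r * r ^ n = m * r ^ (n + 1) := by rw [pow_succ]; ring
      calc b ^ (n+1) * a ^ m = b ^ n * (b * a ^ m) := by rw [pow_succ]; group
        _ = b ^ n * (a ^ (m * r) * b) := by rw [hb]
        _ = (b ^ n * a ^ (m * r)) * b := by group
        _ = a ^ (m * r * r ^ n) * b ^ n * b := by rw [ih (m * r)]
        _ = a ^ (m * r ^ (n+1)) * b ^ (n+1) := by rw [he, pow_succ b, mul_assoc]

lemma conj_aux (a b : G) (r : ℤ) (h : b * a * b⁻¹ = a ^ r) (m k : ℤ) (n : ℕ) :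
    (a ^ m * b ^ n) * a ^ k * (a ^ m * b ^ n)⁻¹ = a ^ (k * r ^ n) := by
  have hb : b ^ n * a ^ k * (b ^ n)⁻¹ = a ^ (k * r ^ n) := by
    rw [key_aux a b r h]; group
  calc (a ^ m * b ^ n) * a ^ k * (a ^ m * b ^ n)⁻¹
      = a ^ m * (b ^ n * a ^ k * (b ^ n)⁻¹) * (a ^ m)⁻¹ := by group
    _ = a ^ m * a ^ (k * r ^ n) * (a ^ m)⁻¹ := by rw [hb]
    _ = a ^ (k * r ^ n) := by
        rw [← zpow_neg, ← zpow_add, ← zpow_add]; ring_nf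

lemma comm_right (a b : G) (r : ℤ) (h : b * a * b⁻¹ = a ^ r) (m γ : ℤ) (δ : ℕ) :
    ⁅a ^ m, a ^ γ * b ^ δ⁆ = a ^ (m * (1 - r ^ δ)) := by
  set y := a ^ γ * b ^ δ
  have hy : y * a ^ (-m) * y⁻¹ = a ^ (-m * r ^ δ) := conj_aux a b r h γ (-m) δ
  calc ⁅a ^ m, y⁆ = a ^ m * (y * a ^ (-m) * y⁻¹) := by
        rw [commutatorElement_def, zpow_neg]; group
    _ = a ^ m * a ^ (-m * r ^ δ) := by rw [hy]
    _ = a ^ (m * (1 - r ^ δ)) := by rw [← zpow_add]; ring_nf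

lemma comm2 (a b : G) (r : ℤ) (h : b * a * b⁻¹ = a ^ r) (α γ : ℤ) (β δ : ℕ) :
    ⁅a ^ α * b ^ β, a ^ γ * b ^ δ⁆
      = a ^ (α * (1 - r ^ δ) - γ * (1 - r ^ β)) := by
  set x := a ^ α * b ^ β with hx
  have h1 : x * a ^ γ * x⁻¹ = a ^ (γ * r ^ β) := conj_aux a b r h α γ β
  have h2 : x * b ^ δ * x⁻¹ = a ^ (α * (1 - r ^ δ)) * b ^ δ := by
    calc x * b ^ δ * x⁻¹ = a ^ α * (b ^ β * b ^ δ * (b ^ β)⁻¹) * a ^ (-α) := by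
          rw [hx, zpow_neg]; group
      _ = a ^ α * b ^ δ * a ^ (-α) := by
          rw [show b ^ β * b ^ δ * (b ^ β)⁻¹ = b ^ δ by rw [pow_mul_comm]; group]
      _ = a ^ α * (a ^ (-α * r ^ δ) * b ^ δ) := by
          rw [mul_assoc, key_aux a b r h δ (-α)]
      _ = a ^ (α * (1 - r ^ δ)) * b ^ δ := by
          rw [← mul_assoc, ← zpow_add]; ring_nf
  calc ⁅x, a ^ γ * b ^ δ⁆
      = (x * a ^ γ * x⁻¹) * (x * b ^ δ * x⁻¹) * (a ^ γ * b ^ δ)⁻¹ := by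
        rw [commutatorElement_def]; group
    _ = a ^ (γ * r ^ β) * (a ^ (α * (1 - r ^ δ)) * b ^ δ) * ((b ^ δ)⁻¹ * a ^ (-γ)) := by
        rw [h1, h2, mul_inv_rev, zpow_neg]
    _ = a ^ (γ * r ^ β) * a ^ (α * (1 - r ^ δ)) * a ^ (-γ) := by group
    _ = a ^ (α * (1 - r ^ δ) - γ * (1 - r ^ β)) := by
        rw [← zpow_add, ← zpow_add]; ring_nf

lemma leftNormedCommutator_append (x : G) (xs : List G) (y : G) :
    leftNormedCommutator (x :: xs ++ [y]) = ⁅leftNormedCommutator (x :: xs), y⁆ := by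
  simp [leftNormedCommutator, List.foldl_append]

end Aux

theorem leftNormedCommutator_eq_of_conj_pow
    {G : Type*} [Group G] (a b : G) (r : ℤ) (h : b * a * b⁻¹ = a ^ r)
    (ℓ : ℕ) (hℓ : 3 ≤ ℓ) (α : ℕ → ℤ) (β : ℕ → ℕ) :
    leftNormedCommutator ((List.range ℓ).map fun i => a ^ α i * b ^ β i)
      = a ^ ((α 0 * (1 - r ^ β 1) - α 1 * (1 - r ^ β 0)) *
          ∏ i ∈ Finset.Ico 2 ℓ, (1 - r ^ β i)) := by
  have main : ∀ ℓ, 2 ≤ ℓ →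
      leftNormedCommutator ((List.range ℓ).map fun i => a ^ α i * b ^ β i)
      = a ^ ((α 0 * (1 - r ^ β 1) - α 1 * (1 - r ^ β 0)) *
          ∏ i ∈ Finset.Ico 2 ℓ, (1 - r ^ β i)) := by
    intro ℓ hℓ
    induction ℓ, hℓ using Nat.le_induction with
    | base =>
        simp only [Finset.Ico_self, Finset.prod_empty, mul_one]
        show leftNormedCommutator [a ^ α 0 * b ^ β 0, a ^ α 1 * b ^ β 1] = _
        simp only [leftNormedCommutator, List.foldl]
        exact comm2 a b r h _ _ _ _
    | succ n hn ih =>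
        have hrange : (List.range (n+1)).map (fun i => a ^ α i * b ^ β i)
            = (List.range n).map (fun i => a ^ α i * b ^ β i) ++ [a ^ α n * b ^ β n] := by
          rw [List.range_succ, List.map_append]; rfl
        obtain ⟨m, hm⟩ : ∃ m, n = m + 1 := ⟨n - 1, by omega⟩
        have hcons : (List.range n).map (fun i => a ^ α i * b ^ β i)
            = (a ^ α 0 * b ^ β 0) ::
              ((List.range m).map Nat.succ).map (fun i => a ^ α i * b ^ β i) := by
          rw [hm, List.range_succ_eq_map, List.map_cons]
        rw [hrange, hcons, leftNormedCommutator_append, ← hcons, ih,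
          comm_right a b r h, Finset.prod_Ico_succ_top (by omega : 2 ≤ n)]
        congr 1
        ring
  exact main ℓ (by omega)
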